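/- Let A be an irreducible nonnegative matrix on a countable set S with ρ(A) < ∞, fix z ∈ S, and let ψ_z be the logarithmic moment generating function of excursions away from z (ψ_z(λ) = log Σ_{ω ∈ Ω̂_z} e^{λℓ(ω)} 𝒜(ω)). Then sup{λ ∈ ℝ : ψ_z(λ) < 0} = −log ρ(A). -/

import Mathlib

open scoped ENNReal
open Filter

variable {S : Type*}

/-- Matrix powers of a nonnegative (possibly infinite-sum) matrix on a countable set. -/
noncomputable def matPow [DecidableEq S] (A : S → S → ℝ≥0∞) : ℕ → S → S → ℝ≥0∞
  | 0 => fun x y => if x = y then 1 else 0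
  | n + 1 => fun x y => ∑' z, matPow A n x z * A z y

/-- Weight of a walk, given as the list of its successive vertices:
the product of the matrix entries along consecutive pairs. -/
noncomputable def chainWeight (A : S → S → ℝ≥0∞) : List S → ℝ≥0∞
  | [] => 1
  | [_] => 1
  | a :: b :: t => A a b * chainWeight A (b :: t)

/-- Excursions away from `z`: walks `z :: l ++ [z]` of length `l.length + 1 ≥ 1`
from `z` to `z` (through edges of the graph of `A`) avoiding `z` at intermediate times.
An excursion is encoded by the list `l` of its intermediate vertices. -/
def ExcAvoid (A : S → S → ℝ≥0∞) (z : S) : Set (List S) :=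
  {l | List.Chain (fun a b => 0 < A a b) z (l ++ [z]) ∧ ∀ v ∈ l, v ≠ z}

/-- The moment generating function `φ_z(λ) = Σ_{ω excursion away from z} e^{λ ℓ(ω)} 𝒜(ω)`. -/
noncomputable def phiz (A : S → S → ℝ≥0∞) (z : S) (lam : ℝ) : ℝ≥0∞ :=
  ∑' l : ExcAvoid A z,
    ENNReal.ofReal (Real.exp (lam * (l.1.length + 1))) * chainWeight A (z :: (l.1 ++ [z]))

section Aux
variable (A : S → S → ℝ≥0∞) (z : S)

@[simp] lemma chainWeight_nil : chainWeight A [] = 1 := rfl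
@[simp] lemma chainWeight_single (a : S) : chainWeight A [a] = 1 := rfl
@[simp] lemma chainWeight_cons_cons (a b : S) (t : List S) :
    chainWeight A (a :: b :: t) = A a b * chainWeight A (b :: t) := rfl

lemma chainWeight_append : ∀ (L : List S) (a : S) (M : List S),
    chainWeight A (L ++ a :: M) = chainWeight A (L ++ [a]) * chainWeight A (a :: M)
  | [], a, M => by simp
  | [b], a, M => by simp
  | b :: c :: L, a, M => by
      have ih := chainWeight_append (c :: L) a M
      simp only [List.cons_append] at ih ⊢
      rw [chainWeight_cons_cons, chainWeight_cons_cons, ih, mul_assoc]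

lemma chainWeight_eq_zero (u : S) : ∀ (l : List S),
    ¬ List.Chain (fun a b => 0 < A a b) u l → chainWeight A (u :: l) = 0
  | [], h => absurd List.Chain.nil h
  | b :: t, h => by
      rw [show List.Chain (fun a b => 0 < A a b) u (b :: t) ↔ _ from List.chain_cons] at h
      push_neg at h
      by_cases hb : 0 < A u b
      · rw [chainWeight_cons_cons, chainWeight_eq_zero b t (h hb), mul_zero]
      · have hb0 : A u b = 0 := by simpa [pos_iff_ne_zero] using hb
        rw [chainWeight_cons_cons, hb0, zero_mul]
end Aux

section MatPow
variable [DecidableEq S] (A : S → S → ℝ≥0∞)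

lemma matPow_succ (n : ℕ) (x y : S) :
    matPow A (n + 1) x y = ∑' w, matPow A n x w * A w y := rfl

lemma tsum_ite_one_mul (y : S) (f : S → ℝ≥0∞) :
    ∑' w, (if y = w then 1 else 0) * f w = f y := by
  rw [tsum_eq_single y (fun b hb => by simp [Ne.symm hb])]
  simp

lemma tsum_mul_ite_one (y : S) (f : S → ℝ≥0∞) :
    ∑' w, f w * (if w = y then 1 else 0) = f y := by
  rw [tsum_eq_single y (fun b hb => by simp [hb])]
  simp

lemma matPow_one (x y : S) : matPow A 1 x y = A x y := by
  rw [matPow_succ]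
  exact tsum_ite_one_mul x (fun w => A w y)

lemma matPow_succ_left (n : ℕ) : ∀ x y : S,
    matPow A (n + 1) x y = ∑' w, A x w * matPow A n w y := by
  induction n with
  | zero =>
    intro x y
    rw [matPow_one]
    exact (tsum_mul_ite_one y (A x)).symm
  | succ n ih =>
    intro x y
    rw [matPow_succ]
    calc ∑' w, matPow A (n + 1) x w * A w y
        = ∑' w, (∑' v, A x v * matPow A n v w) * A w y := by
          exact tsum_congr fun w => by rw [ih x w]
      _ = ∑' w, ∑' v, A x v * matPow A n v w * A w y := by
          exact tsum_congr fun w => (ENNReal.tsum_mul_right).symm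
      _ = ∑' v, ∑' w, A x v * (matPow A n v w * A w y) := by
          rw [ENNReal.tsum_comm]
          exact tsum_congr fun v => tsum_congr fun w => by rw [mul_assoc]
      _ = ∑' v, A x v * ∑' w, matPow A n v w * A w y := by
          exact tsum_congr fun v => ENNReal.tsum_mul_left
      _ = ∑' v, A x v * matPow A (n + 1) v y := by
          exact tsum_congr fun v => by rw [matPow_succ]

lemma matPow_add (m : ℕ) (n : ℕ) : ∀ x y : S,
    matPow A (m + n) x y = ∑' w, matPow A m x w * matPow A n w y := by
  induction n with
  | zero =>
    intro x y
    simp only [Nat.add_zero]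
    exact (tsum_mul_ite_one y (matPow A m x)).symm
  | succ n ih =>
    intro x y
    rw [show m + (n + 1) = (m + n) + 1 from rfl, matPow_succ]
    calc ∑' w, matPow A (m + n) x w * A w y
        = ∑' w, (∑' v, matPow A m x v * matPow A n v w) * A w y := by
          exact tsum_congr fun w => by rw [ih x w]
      _ = ∑' w, ∑' v, matPow A m x v * matPow A n v w * A w y := by
          exact tsum_congr fun w => (ENNReal.tsum_mul_right).symm
      _ = ∑' v, ∑' w, matPow A m x v * (matPow A n v w * A w y) := by
          rw [ENNReal.tsum_comm]
          exact tsum_congr fun v => tsum_congr fun w => by rw [mul_assoc]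
      _ = ∑' v, matPow A m x v * ∑' w, matPow A n v w * A w y := by
          exact tsum_congr fun v => ENNReal.tsum_mul_left
      _ = ∑' v, matPow A m x v * matPow A (n + 1) v y := by
          exact tsum_congr fun v => by rw [matPow_succ]

lemma le_matPow_add (m n : ℕ) (z : S) :
    matPow A m z z * matPow A n z z ≤ matPow A (m + n) z z := by
  rw [matPow_add A m n z z]
  exact ENNReal.le_tsum z

def consLen (n : ℕ) : S × {l : List S // l.length = n} ≃ {l : List S // l.length = n + 1} where
  toFun p := ⟨p.1 :: p.2.1, by simp [p.2.2]⟩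
  invFun l := match l with
    | ⟨[], h⟩ => absurd h (by simp)
    | ⟨a :: t, h⟩ => (a, ⟨t, by simpa using h⟩)
  left_inv p := rfl
  right_inv l := by
    obtain ⟨l, h⟩ := l
    cases l with
    | nil => simp at h
    | cons a t => rfl

lemma walkSum (n : ℕ) : ∀ u y : S, matPow A (n + 1) u y =
    ∑' l : {l : List S // l.length = n}, chainWeight A (u :: (l.1 ++ [y])) := by
  induction n with
  | zero =>
    intro u y
    rw [matPow_one, tsum_eq_single (⟨[], rfl⟩ : {l : List S // l.length = 0})
      (fun b hb => absurd (Subtype.ext (List.length_eq_zero_iff.mp b.2)) hb)]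
    simp
  | succ n ih =>
    intro u y
    rw [matPow_succ_left]
    calc ∑' w, A u w * matPow A (n + 1) w y
        = ∑' w, A u w * ∑' l : {l : List S // l.length = n},
            chainWeight A (w :: (l.1 ++ [y])) := tsum_congr fun w => by rw [ih w y]
      _ = ∑' w, ∑' l : {l : List S // l.length = n},
            chainWeight A (u :: w :: (l.1 ++ [y])) := by
          refine tsum_congr fun w => ?_
          rw [← ENNReal.tsum_mul_left]
          exact tsum_congr fun l => (chainWeight_cons_cons A u w (l.1 ++ [y])).symm
      _ = ∑' p : S × {l : List S // l.length = n},
            chainWeight A (u :: p.1 :: (p.2.1 ++ [y])) := ENNReal.tsum_prod.symm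
      _ = ∑' l : {l : List S // l.length = n + 1},
            chainWeight A (u :: (l.1 ++ [y])) := by
          rw [← (consLen n).tsum_eq (fun l => chainWeight A (u :: (l.1 ++ [y])))]
          rfl

end MatPow

section Renewal
variable (A : S → S → ℝ≥0∞) (z : S) (lam : ℝ)

/-- summand of the excursion generating function, as a function of all lists -/
noncomputable def excf (l : List S) : ℝ≥0∞ :=
  ENNReal.ofReal (Real.exp lam) ^ (l.length + 1) * chainWeight A (z :: (l ++ [z]))

def NoZ (z : S) : Set (List S) := {l | ∀ v ∈ l, v ≠ z}
def HasZ (z : S) : Set (List S) := {l | z ∈ l}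

@[simp] lemma mem_NoZ (l : List S) : l ∈ NoZ z ↔ ∀ v ∈ l, v ≠ z := Iff.rfl
@[simp] lemma mem_HasZ (l : List S) : l ∈ HasZ z ↔ z ∈ l := Iff.rfl

lemma excf_eq_zero_of_not_chain {l : List S}
    (h : ¬ List.Chain (fun a b => 0 < A a b) z (l ++ [z])) : excf A z lam l = 0 := by
  rw [excf, chainWeight_eq_zero A z _ h, mul_zero]

lemma phiz_eq : phiz A z lam = ∑' l : NoZ z, excf A z lam l.1 := by
  have hterm : ∀ l : List S,
      ENNReal.ofReal (Real.exp (lam * (l.length + 1))) * chainWeight A (z :: (l ++ [z]))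
        = excf A z lam l := by
    intro l
    rw [excf]
    congr 1
    rw [show (lam * ((l.length : ℝ) + 1)) = ((l.length + 1 : ℕ) : ℝ) * lam by push_cast; ring,
      Real.exp_nat_mul, ENNReal.ofReal_pow (Real.exp_nonneg lam)]
  rw [phiz]
  rw [tsum_congr (fun l : ExcAvoid A z => hterm l.1)]
  rw [tsum_subtype (ExcAvoid A z) (excf A z lam), tsum_subtype (NoZ z) (excf A z lam)]
  refine tsum_congr fun l => ?_
  by_cases h1 : l ∈ ExcAvoid A z
  · rw [Set.indicator_of_mem h1, Set.indicator_of_mem (show l ∈ NoZ z from h1.2)]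
  · rw [Set.indicator_of_notMem h1]
    by_cases h2 : l ∈ NoZ z
    · rw [Set.indicator_of_mem h2]
      have : ¬ List.Chain (fun a b => 0 < A a b) z (l ++ [z]) := fun hc => h1 ⟨hc, h2⟩
      exact (excf_eq_zero_of_not_chain A z lam this).symm
    · rw [Set.indicator_of_notMem h2]

lemma excf_mult (l₁ l₂ : List S) :
    excf A z lam (l₁ ++ z :: l₂) = excf A z lam l₁ * excf A z lam l₂ := by
  simp only [excf]
  have hlen : (l₁ ++ z :: l₂).length + 1 = (l₁.length + 1) + (l₂.length + 1) := by
    simp [List.length_append]; ring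
  have hlist : z :: ((l₁ ++ z :: l₂) ++ [z]) = (z :: l₁) ++ z :: (l₂ ++ [z]) := by simp
  have hw : chainWeight A (z :: ((l₁ ++ z :: l₂) ++ [z]))
      = chainWeight A (z :: (l₁ ++ [z])) * chainWeight A (z :: (l₂ ++ [z])) := by
    rw [hlist, chainWeight_append A (z :: l₁) z (l₂ ++ [z])]
    rfl
  rw [hlen, hw, pow_add]
  ring

lemma exists_split : ∀ l : List S, z ∈ l →
    ∃ (l₁ l₂ : List S), (∀ v ∈ l₁, v ≠ z) ∧ l = l₁ ++ z :: l₂ := by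
  intro l
  induction l with
  | nil => intro h; simp at h
  | cons a t ih =>
    intro h
    by_cases ha : a = z
    · exact ⟨[], t, by simp, by simp [ha]⟩
    · have hz : z ∈ t := by
        rcases List.mem_cons.mp h with h' | h'
        · exact absurd h'.symm ha
        · exact h'
      obtain ⟨l₁, l₂, h1, h2⟩ := ih hz
      exact ⟨a :: l₁, l₂, by
        intro v hv
        rcases List.mem_cons.mp hv with rfl | hv
        · exact ha
        · exact h1 v hv, by simp [h2]⟩

lemma first_split : ∀ (l₁ : List S) (l₁' l₂ l₂' : List S), (∀ v ∈ l₁, v ≠ z) →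
    (∀ v ∈ l₁', v ≠ z) → l₁ ++ z :: l₂ = l₁' ++ z :: l₂' → l₁ = l₁' ∧ l₂ = l₂' := by
  intro l₁
  induction l₁ with
  | nil =>
    intro l₁' l₂ l₂' _ h' heq
    cases l₁' with
    | nil => simpa using heq
    | cons a t =>
      exfalso
      simp only [List.nil_append, List.cons_append, List.cons.injEq] at heq
      exact h' a (by simp) heq.1.symm
  | cons a t ih =>
    intro l₁' l₂ l₂' h h' heq
    cases l₁' with
    | nil =>
      exfalso
      simp only [List.nil_append, List.cons_append, List.cons.injEq] at heq
      exact h a (by simp) heq.1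
    | cons a' t' =>
      simp only [List.cons_append, List.cons.injEq] at heq
      obtain ⟨h1, h2⟩ := ih t' l₂ l₂' (fun v hv => h v (by simp [hv]))
        (fun v hv => h' v (by simp [hv])) heq.2
      exact ⟨by rw [heq.1, h1], h2⟩

/-- the splitting map -/
def splitMap (p : (NoZ z) × List S) : (HasZ z) :=
  ⟨p.1.1 ++ z :: p.2, by simp [HasZ]⟩

lemma splitMap_bij : Function.Bijective (splitMap z) := by
  constructor
  · rintro ⟨⟨l₁, h₁⟩, l₂⟩ ⟨⟨l₁', h₁'⟩, l₂'⟩ h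
    have heq : l₁ ++ z :: l₂ = l₁' ++ z :: l₂' := congrArg Subtype.val h
    obtain ⟨e1, e2⟩ := first_split z l₁ l₁' l₂ l₂' h₁ h₁' heq
    simp [e1, e2]
  · rintro ⟨l, hl⟩
    obtain ⟨l₁, l₂, h1, h2⟩ := exists_split z l hl
    exact ⟨(⟨l₁, h1⟩, l₂), by simp [splitMap, h2.symm]⟩

lemma split_T (f : List S → ℝ≥0∞) :
    ∑' l : List S, f l = (∑' l : NoZ z, f l.1)
      + ∑' p : (NoZ z) × List S, f (p.1.1 ++ z :: p.2) := by
  have hsplit : ∀ l : List S, f l = (NoZ z).indicator f l + (HasZ z).indicator f l := by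
    intro l
    by_cases h : z ∈ l
    · rw [Set.indicator_of_mem (show l ∈ HasZ z from h),
        Set.indicator_of_notMem (show l ∉ NoZ z from fun hmem => hmem z h rfl), zero_add]
    · rw [Set.indicator_of_notMem (show l ∉ HasZ z from h),
        Set.indicator_of_mem (show l ∈ NoZ z from fun v hv h' => h (h' ▸ hv)), add_zero]
  rw [tsum_congr hsplit, ENNReal.tsum_add, ← tsum_subtype, ← tsum_subtype]
  congr 1
  rw [← (Equiv.ofBijective (splitMap z) (splitMap_bij z)).tsum_eq
    (fun l : HasZ z => f l.1)]
  rfl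

end Renewal

set_option maxHeartbeats 1000000
set_option linter.unusedSectionVars false

section GenFun
variable [DecidableEq S] (A : S → S → ℝ≥0∞) (z : S) (lam : ℝ)

def lenEquiv : (Σ n : ℕ, {l : List S // l.length = n}) ≃ List S where
  toFun p := p.2.1
  invFun l := ⟨l.length, ⟨l, rfl⟩⟩
  left_inv p := by
    obtain ⟨n, l, hl⟩ := p
    subst hl
    rfl
  right_inv l := rfl

lemma lengthSigma (f : List S → ℝ≥0∞) :
    ∑' l : List S, f l = ∑' n : ℕ, ∑' l : {l : List S // l.length = n}, f l.1 := by
  rw [← (lenEquiv (S := S)).tsum_eq f, ENNReal.tsum_sigma']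
  exact tsum_congr fun n => tsum_congr fun l => rfl

lemma T_eq_sumG : ∑' l : List S, excf A z lam l
    = ∑' n : ℕ, ENNReal.ofReal (Real.exp lam) ^ (n + 1) * matPow A (n + 1) z z := by
  rw [lengthSigma (excf A z lam)]
  refine tsum_congr fun n => ?_
  rw [walkSum A n z z, ← ENNReal.tsum_mul_left]
  refine tsum_congr fun l => ?_
  rw [excf, l.2]

lemma QN_eq (N : ℕ) : ∑' l : List S, (if l.length ≤ N then excf A z lam l else 0)
    = ∑ n ∈ Finset.range (N + 1),
        ENNReal.ofReal (Real.exp lam) ^ (n + 1) * matPow A (n + 1) z z := by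
  rw [lengthSigma]
  have h1 : ∀ n : ℕ, (∑' l : {l : List S // l.length = n},
      (if l.1.length ≤ N then excf A z lam l.1 else 0))
      = (if n ≤ N then ENNReal.ofReal (Real.exp lam) ^ (n + 1) * matPow A (n + 1) z z
          else 0) := by
    intro n
    by_cases hn : n ≤ N
    · rw [if_pos hn, walkSum A n z z, ← ENNReal.tsum_mul_left]
      refine tsum_congr fun l => ?_
      rw [if_pos (show l.1.length ≤ N by rw [l.2]; exact hn), excf, l.2]
    · rw [if_neg hn]
      refine ENNReal.tsum_eq_zero.mpr fun l => ?_
      rw [if_neg (show ¬ l.1.length ≤ N by rw [l.2]; exact hn)]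
  rw [tsum_congr h1, tsum_eq_sum (s := Finset.range (N + 1))
    (fun b hb => if_neg (by simp at hb; omega))]
  exact Finset.sum_congr rfl fun n hn => if_pos (by simp at hn; omega)

lemma T_renewal : ∑' l : List S, excf A z lam l
    = phiz A z lam + phiz A z lam * ∑' l : List S, excf A z lam l := by
  rw [phiz_eq]
  conv_lhs => rw [split_T z (excf A z lam)]
  congr 1
  calc ∑' p : (NoZ z) × List S, excf A z lam (p.1.1 ++ z :: p.2)
      = ∑' p : (NoZ z) × List S, excf A z lam p.1.1 * excf A z lam p.2 :=
        tsum_congr fun p => excf_mult A z lam p.1.1 p.2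
    _ = ∑' l₁ : NoZ z, ∑' l₂ : List S, excf A z lam l₁.1 * excf A z lam l₂ :=
        ENNReal.tsum_prod (f := fun (l₁ : NoZ z) (l₂ : List S) => excf A z lam l₁.1 * excf A z lam l₂)
    _ = ∑' l₁ : NoZ z, excf A z lam l₁.1 * ∑' l₂ : List S, excf A z lam l₂ :=
        tsum_congr fun l₁ => ENNReal.tsum_mul_left
    _ = (∑' l₁ : NoZ z, excf A z lam l₁.1) * ∑' l₂ : List S, excf A z lam l₂ :=
        ENNReal.tsum_mul_right

lemma TN_renewal (N : ℕ) :
    ∑' l : List S, (if l.length ≤ N then excf A z lam l else 0)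
      ≤ phiz A z lam + phiz A z lam
        * ∑' l : List S, (if l.length ≤ N then excf A z lam l else 0) := by
  set fN : List S → ℝ≥0∞ := fun l => if l.length ≤ N then excf A z lam l else 0 with hfN
  conv_lhs => rw [split_T z fN]
  have h1 : (∑' l : NoZ z, fN l.1) ≤ phiz A z lam := by
    rw [phiz_eq]
    refine ENNReal.tsum_le_tsum fun l => ?_
    by_cases h : l.1.length ≤ N
    · rw [hfN]; simp only [if_pos h]; exact le_rfl
    · rw [hfN]; simp only [if_neg h]; exact zero_le
  have h2 : (∑' p : (NoZ z) × List S, fN (p.1.1 ++ z :: p.2))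
      ≤ phiz A z lam * ∑' l : List S, fN l := by
    have hpt : ∀ p : (NoZ z) × List S,
        fN (p.1.1 ++ z :: p.2) ≤ excf A z lam p.1.1 * fN p.2 := by
      rintro ⟨⟨l₁, h₁⟩, l₂⟩
      simp only [hfN]
      by_cases h : (l₁ ++ z :: l₂).length ≤ N
      · rw [if_pos h, excf_mult, if_pos (by simp at h ⊢; omega)]
      · rw [if_neg h]; exact zero_le
    calc ∑' p : (NoZ z) × List S, fN (p.1.1 ++ z :: p.2)
        ≤ ∑' p : (NoZ z) × List S, excf A z lam p.1.1 * fN p.2 :=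
          ENNReal.tsum_le_tsum hpt
      _ = ∑' l₁ : NoZ z, ∑' l₂ : List S, excf A z lam l₁.1 * fN l₂ :=
          ENNReal.tsum_prod (f := fun (l₁ : NoZ z) (l₂ : List S) => excf A z lam l₁.1 * fN l₂)
      _ = ∑' l₁ : NoZ z, excf A z lam l₁.1 * ∑' l₂ : List S, fN l₂ :=
          tsum_congr fun l₁ => ENNReal.tsum_mul_left
      _ = (∑' l₁ : NoZ z, excf A z lam l₁.1) * ∑' l₂ : List S, fN l₂ :=
          ENNReal.tsum_mul_right
      _ = phiz A z lam * ∑' l : List S, fN l := by rw [phiz_eq]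
  exact add_le_add h1 h2

end GenFun

set_option maxHeartbeats 1000000 in
lemma matPow_pow_le [DecidableEq S] (A : S → S → ℝ≥0∞) (z : S) (q : ℕ) :
    ∀ k : ℕ, 1 ≤ k → (matPow A q z z) ^ k ≤ matPow A (k * q) z z := by
  intro k
  induction k with
  | zero => omega
  | succ k ih =>
    intro _
    rcases Nat.eq_zero_or_pos k with rfl | hkpos
    · simp
    · calc (matPow A q z z) ^ (k + 1) = (matPow A q z z) ^ k * matPow A q z z :=
            pow_succ _ _
        _ ≤ matPow A (k * q) z z * matPow A q z z := mul_le_mul_left (ih hkpos) _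
        _ ≤ matPow A (k * q + q) z z := le_matPow_add A (k * q) q z
        _ = matPow A ((k + 1) * q) z z := by rw [show k * q + q = (k + 1) * q by ring]

theorem excursion_mgf_threshold_eq_neg_log_spectral_radius [Countable S] [DecidableEq S]
    (A : S → S → ℝ≥0∞) (hfin : ∀ x y, A x y ≠ ⊤)
    (hirr : ∀ x y : S, ∃ n, 1 ≤ n ∧ 0 < matPow A n x y)
    (z : S) (ρ : ℝ≥0∞) (hρ0 : 0 < ρ) (hρT : ρ ≠ ⊤)
    (hρ : ∀ x, Tendsto (fun n : ℕ => (matPow A n x x) ^ ((n : ℝ)⁻¹))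
        (atTop ⊓ Filter.principal {n : ℕ | 0 < matPow A n x x}) (nhds ρ)) :
    sSup {lam : ℝ | phiz A z lam < 1} = - Real.log ρ.toReal := by
  classical
  have hrpos : 0 < ρ.toReal := ENNReal.toReal_pos hρ0.ne' hρT
  set r : ℝ := ρ.toReal with hr
  set L : ℝ := Real.log r with hL
  have hexpL : Real.exp L = r := Real.exp_log hrpos
  have hρr : ρ = ENNReal.ofReal r := (ENNReal.ofReal_toReal hρT).symm
  have hF := hρ z
  obtain ⟨m, hm1, hmpos⟩ := hirr z z
  -- infinitely many n with positive diagonal entry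
  have hPinf : ∀ N : ℕ, ∃ n, N ≤ n ∧ 1 ≤ n ∧ 0 < matPow A n z z := by
    intro N
    have hle : N + 1 ≤ (N + 1) * m := Nat.le_mul_of_pos_right _ (by omega)
    exact ⟨(N + 1) * m, by omega, by omega,
      lt_of_lt_of_le (ENNReal.pow_pos hmpos (N + 1)) (matPow_pow_le A z m (N + 1) (by omega))⟩
  -- all diagonal entries are finite
  have hGfin : ∀ n, matPow A n z z ≠ ⊤ := by
    intro n hn
    have hn1 : 1 ≤ n := by
      rcases Nat.eq_zero_or_pos n with rfl | h
      · exact absurd hn (by simp [matPow])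
      · omega
    have htop : ∀ k, 1 ≤ k → matPow A (k * n) z z = ⊤ := by
      intro k hk
      have h2 := matPow_pow_le A z n k hk
      rw [hn, ENNReal.top_pow (by omega)] at h2
      exact top_le_iff.mp h2
    have hlt : ρ < ρ + 1 := ENNReal.lt_add_right hρT one_ne_zero
    have hev : ∀ᶠ nn in atTop ⊓ Filter.principal {n : ℕ | 0 < matPow A n z z},
        (matPow A nn z z) ^ ((nn : ℝ)⁻¹) < ρ + 1 := hF.eventually_lt_const hlt
    rw [Filter.eventually_inf_principal] at hev
    rw [Filter.eventually_atTop] at hev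
    obtain ⟨N, hN⟩ := hev
    have hle : N + 1 ≤ (N + 1) * n := Nat.le_mul_of_pos_right _ (by omega)
    have hP : (N + 1) * n ∈ {n : ℕ | 0 < matPow A n z z} := by
      show 0 < matPow A ((N + 1) * n) z z
      rw [htop (N + 1) (by omega)]
      exact ENNReal.zero_lt_top
    have h3 := hN ((N + 1) * n) (by omega) hP
    rw [htop (N + 1) (by omega), ENNReal.top_rpow_of_pos (by positivity)] at h3
    exact not_top_lt h3
  -- claim 1 : subcritical lambda
  have claim1 : ∀ lam : ℝ, lam < -L → phiz A z lam < 1 := by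
    intro lam hlam
    set x := ENNReal.ofReal (Real.exp lam) with hx
    set ε := (-L - lam) / 2 with hε
    have hεpos : 0 < ε := by rw [hε]; linarith
    set c := ENNReal.ofReal (Real.exp (lam + L + ε)) with hc
    have hc1 : c < 1 := by
      rw [hc, ENNReal.ofReal_lt_one]
      calc Real.exp (lam + L + ε) < Real.exp 0 := Real.exp_lt_exp.mpr (by rw [hε]; linarith)
        _ = 1 := Real.exp_zero
    have hρ' : ρ < ρ * ENNReal.ofReal (Real.exp ε) := by
      conv_lhs => rw [← mul_one ρ]
      refine ENNReal.mul_lt_mul_right hρ0.ne' hρT ?_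
      rw [ENNReal.one_lt_ofReal]
      calc (1:ℝ) = Real.exp 0 := Real.exp_zero.symm
        _ < Real.exp ε := Real.exp_lt_exp.mpr hεpos
    have hev : ∀ᶠ nn in atTop ⊓ Filter.principal {n : ℕ | 0 < matPow A n z z},
        (matPow A nn z z) ^ ((nn : ℝ)⁻¹) < ρ * ENNReal.ofReal (Real.exp ε) :=
      hF.eventually_lt_const hρ'
    rw [Filter.eventually_inf_principal, Filter.eventually_atTop] at hev
    obtain ⟨N, hN⟩ := hev
    have hxc : x * (ρ * ENNReal.ofReal (Real.exp ε)) = c := by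
      rw [hx, hc, hρr, ← ENNReal.ofReal_mul (le_of_lt hrpos),
        ← ENNReal.ofReal_mul (Real.exp_nonneg lam)]
      congr 1
      rw [← hexpL, ← Real.exp_add, ← Real.exp_add]
      ring_nf
    have hbound : ∀ n, max N 1 ≤ n → x ^ n * matPow A n z z ≤ c ^ n := by
      intro n hn
      have hn1 : 1 ≤ n := le_trans (le_max_right N 1) hn
      by_cases hp : 0 < matPow A n z z
      · have h2 := hN n (le_trans (le_max_left N 1) hn) hp
        have h3 : matPow A n z z ≤ (ρ * ENNReal.ofReal (Real.exp ε)) ^ n := by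
          have h4 := pow_le_pow_left₀ (zero_le) h2.le n
          rwa [ENNReal.rpow_inv_natCast_pow (by omega)] at h4
        calc x ^ n * matPow A n z z
            ≤ x ^ n * (ρ * ENNReal.ofReal (Real.exp ε)) ^ n := mul_le_mul_right h3 _
          _ = (x * (ρ * ENNReal.ofReal (Real.exp ε))) ^ n := (mul_pow _ _ _).symm
          _ = c ^ n := by rw [hxc]
      · have h0 : matPow A n z z = 0 := by simpa [pos_iff_ne_zero] using hp
        rw [h0, mul_zero]
        exact zero_le
    have hsum : (∑' n : ℕ, x ^ n * matPow A n z z) ≠ ⊤ := by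
      have hpt : ∀ n : ℕ, x ^ n * matPow A n z z
          ≤ (if n < max N 1 then x ^ n * matPow A n z z else 0)
            + (if n < max N 1 then 0 else c ^ n) := by
        intro n
        by_cases h : n < max N 1
        · rw [if_pos h, if_pos h, add_zero]
        · rw [if_neg h, if_neg h, zero_add]
          exact hbound n (by omega)
      refine ne_top_of_le_ne_top ?_ (le_trans (ENNReal.tsum_le_tsum hpt)
        (le_of_eq (ENNReal.tsum_add)))
      refine ENNReal.add_ne_top.mpr ⟨?_, ?_⟩
      · rw [tsum_eq_sum (s := Finset.range (max N 1))
          (fun b hb => if_neg (by simpa using hb))]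
        refine (ENNReal.sum_lt_top.mpr fun n _ => ?_).ne
        split
        · exact ENNReal.mul_lt_top
            (ENNReal.pow_ne_top ENNReal.ofReal_ne_top).lt_top (hGfin n).lt_top
        · simp
      · refine ne_top_of_le_ne_top ?_ (ENNReal.tsum_le_tsum
          (f := fun n : ℕ => if n < max N 1 then 0 else c ^ n) (g := fun n : ℕ => c ^ n)
          (fun n => by by_cases h : n < max N 1 <;> simp [h]))
        rw [ENNReal.tsum_geometric]
        exact ENNReal.inv_ne_top.mpr (tsub_pos_iff_lt.mpr hc1).ne'
    have hT : (∑' l : List S, excf A z lam l) ≠ ⊤ := by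
      rw [T_eq_sumG A z lam]
      exact ne_top_of_le_ne_top hsum
        (ENNReal.tsum_comp_le_tsum_of_injective Nat.succ_injective
          (fun n => x ^ n * matPow A n z z))
    by_contra hφ
    push_neg at hφ
    have h5 : 1 + (∑' l : List S, excf A z lam l)
        ≤ phiz A z lam + phiz A z lam * (∑' l : List S, excf A z lam l) :=
      add_le_add hφ (le_mul_of_one_le_left (zero_le) hφ)
    rw [← T_renewal A z lam] at h5
    exact (ENNReal.lt_add_right hT one_ne_zero).not_ge (by rwa [add_comm] at h5)
  -- claim 2 : supercritical lambda
  have claim2 : ∀ lam : ℝ, -L < lam → ¬ (phiz A z lam < 1) := by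
    intro lam hlam hφ
    set x := ENNReal.ofReal (Real.exp lam) with hx
    set ε := (lam + L) / 2 with hε
    have hεpos : 0 < ε := by rw [hε]; linarith
    have hρ'' : ρ * ENNReal.ofReal (Real.exp (-ε)) < ρ := by
      conv_rhs => rw [← mul_one ρ]
      refine ENNReal.mul_lt_mul_right hρ0.ne' hρT ?_
      rw [ENNReal.ofReal_lt_one]
      calc Real.exp (-ε) < Real.exp 0 := Real.exp_lt_exp.mpr (by linarith)
        _ = 1 := Real.exp_zero
    have hev : ∀ᶠ nn in atTop ⊓ Filter.principal {n : ℕ | 0 < matPow A n z z},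
        ρ * ENNReal.ofReal (Real.exp (-ε)) < (matPow A nn z z) ^ ((nn : ℝ)⁻¹) :=
      hF.eventually_const_lt hρ''
    rw [Filter.eventually_inf_principal, Filter.eventually_atTop] at hev
    obtain ⟨N, hN⟩ := hev
    have hxc : (1:ℝ≥0∞) ≤ x * (ρ * ENNReal.ofReal (Real.exp (-ε))) := by
      rw [hx, hρr, ← ENNReal.ofReal_mul (le_of_lt hrpos),
        ← ENNReal.ofReal_mul (Real.exp_nonneg lam), ENNReal.one_le_ofReal,
        ← hexpL, ← Real.exp_add, ← Real.exp_add]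
      exact Real.one_le_exp (by rw [hε]; linarith)
    have hfreq : ∀ M : ℕ, ∃ n, M ≤ n ∧ 1 ≤ n ∧ 1 ≤ x ^ n * matPow A n z z := by
      intro M
      obtain ⟨n, hn1, hn2, hn3⟩ := hPinf (max M N)
      refine ⟨n, le_trans (le_max_left M N) hn1, hn2, ?_⟩
      have h2 := hN n (le_trans (le_max_right M N) hn1) hn3
      have h3 : (ρ * ENNReal.ofReal (Real.exp (-ε))) ^ n ≤ matPow A n z z := by
        have h4 := pow_le_pow_left₀ (zero_le) h2.le n
        rwa [ENNReal.rpow_inv_natCast_pow (by omega)] at h4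
      calc (1:ℝ≥0∞) = 1 ^ n := (one_pow n).symm
        _ ≤ (x * (ρ * ENNReal.ofReal (Real.exp (-ε)))) ^ n :=
            pow_le_pow_left₀ (zero_le) hxc n
        _ = x ^ n * (ρ * ENNReal.ofReal (Real.exp (-ε))) ^ n := mul_pow _ _ _
        _ ≤ x ^ n * matPow A n z z := mul_le_mul_right h3 _
    have hTtop : (∑' n : ℕ, x ^ (n + 1) * matPow A (n + 1) z z) = ⊤ := by
      by_contra hne
      have h0 := ENNReal.tendsto_atTop_zero_of_tsum_ne_top hne
      have h1 : ∀ᶠ n in atTop, x ^ (n + 1) * matPow A (n + 1) z z < 1 :=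
        h0.eventually_lt_const (by norm_num)
      rw [Filter.eventually_atTop] at h1
      obtain ⟨N', hN'⟩ := h1
      obtain ⟨n, hn1, hn2, hn3⟩ := hfreq (N' + 1)
      have h2 := hN' (n - 1) (by omega)
      rw [show n - 1 + 1 = n by omega] at h2
      exact h2.not_ge hn3
    have hφT : phiz A z lam ≠ ⊤ := (hφ.trans ENNReal.one_lt_top).ne
    have h1φ0 : (1:ℝ≥0∞) - phiz A z lam ≠ 0 := (tsub_pos_iff_lt.mpr hφ).ne'
    have h1φT : (1:ℝ≥0∞) - phiz A z lam ≠ ⊤ :=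
      ne_top_of_le_ne_top ENNReal.one_ne_top tsub_le_self
    have hQbound : ∀ K : ℕ,
        (∑ n ∈ Finset.range (K + 1), x ^ (n + 1) * matPow A (n + 1) z z)
          ≤ phiz A z lam / (1 - phiz A z lam) := by
      intro K
      set a := ∑' l : List S, (if l.length ≤ K then excf A z lam l else 0) with ha
      have haQ : a = ∑ n ∈ Finset.range (K + 1), x ^ (n + 1) * matPow A (n + 1) z z :=
        QN_eq A z lam K
      have haT : a ≠ ⊤ := by
        rw [haQ]
        refine (ENNReal.sum_lt_top.mpr fun n _ => ?_).ne
        exact ENNReal.mul_lt_top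
          (ENNReal.pow_ne_top ENNReal.ofReal_ne_top).lt_top (hGfin (n + 1)).lt_top
      have hrec : a ≤ phiz A z lam + phiz A z lam * a := TN_renewal A z lam K
      have h2 : a * (1 - phiz A z lam) ≤ phiz A z lam := by
        rw [mul_comm, ENNReal.sub_mul (fun _ _ => haT), one_mul]
        exact tsub_le_iff_right.mpr hrec
      rw [← haQ]
      exact (ENNReal.le_div_iff_mul_le (Or.inl h1φ0) (Or.inl h1φT)).mpr h2
    have hle : (∑' n : ℕ, x ^ (n + 1) * matPow A (n + 1) z z)
        ≤ phiz A z lam / (1 - phiz A z lam) := by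
      rw [ENNReal.tsum_eq_iSup_sum]
      refine iSup_le fun s => ?_
      obtain ⟨K, hK⟩ := Finset.exists_nat_subset_range s
      calc ∑ n ∈ s, x ^ (n + 1) * matPow A (n + 1) z z
          ≤ ∑ n ∈ Finset.range (K + 1), x ^ (n + 1) * matPow A (n + 1) z z :=
            Finset.sum_le_sum_of_subset
              (hK.trans (Finset.range_subset_range.mpr (by omega)))
        _ ≤ phiz A z lam / (1 - phiz A z lam) := hQbound K
    rw [hTtop] at hle
    exact (ENNReal.div_lt_top hφT h1φ0).ne (top_le_iff.mp hle)
  -- conclusion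
  have hbdd : ∀ lam ∈ {lam : ℝ | phiz A z lam < 1}, lam ≤ -L := by
    intro lam hl
    by_contra h
    push_neg at h
    exact claim2 lam h hl
  apply le_antisymm
  · exact csSup_le ⟨-L - 1, claim1 _ (by linarith)⟩ hbdd
  · rw [show -Real.log ρ.toReal = sSup (Set.Iio (-L)) from (csSup_Iio).symm]
    exact csSup_le_csSup ⟨-L, hbdd⟩ ⟨-L - 1, by simp⟩ (fun y hy => claim1 y hy)
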